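/- arXiv:2308.02174 — 2 statements merged into one kernel-verified Lean document; each statement's English description precedes it below -/
import Mathlib

section
/- Let p, q, r be integers with p, q, r > 1 satisfying (r+1)/2 < p+q < r. Then (p+q)(r-1)/(r+1) > max{(p+q-1)(p+q)/(p+q+1), (r-1)/2}. -/
theorem stmt_3 (p q r : ℤ) (hp : 1 < p) (hq : 1 < q) (hr : 1 < r)
    (h1 : ((r : ℝ) + 1) / 2 < (p : ℝ) + q) (h2 : p + q < r) :
    ((p : ℝ) + q) * (r - 1) / (r + 1) >
      max (((p : ℝ) + q - 1) * ((p : ℝ) + q) / ((p : ℝ) + q + 1)) (((r : ℝ) - 1) / 2) := by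
  have hr' : (1:ℝ) < r := by exact_mod_cast hr
  have h2' : (p:ℝ) + q < r := by exact_mod_cast h2
  have hp' : (1:ℝ) < p := by exact_mod_cast hp
  have hq' : (1:ℝ) < q := by exact_mod_cast hq
  have hs : (1:ℝ) < (p:ℝ) + q := by linarith
  rw [gt_iff_lt, max_lt_iff]
  constructor
  · rw [div_lt_div_iff₀ (by linarith) (by linarith)]
    nlinarith
  · rw [div_lt_div_iff₀ (by linarith) (by linarith)]
    nlinarith
end

section
/- Let β₀ ≥ 2 be an integer, p > 0 a real with (β₀+1)p < 1, and R ≥ 1. For (x,t) with t - x ≥ R and x ≥ 0 (and x + t ≥ R), the iterated integral ∫₀^t ∫_{x-t+s}^{x+t-s} (1+y+s)^{-(β₀+1)p} χ_D(y,s) dy ds, where χ_D is the indicator of D = {(y,s) : s - |y| ≥ R}, is bounded by C (t - x - R)(1+t+x)^{-(β₀+1)p+1} for some constant C depending only on β₀, p, R. -/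
open MeasureTheory

set_option maxHeartbeats 1000000

theorem stmt_10 (β₀ : ℕ) (hβ : 2 ≤ β₀) (p R : ℝ) (hp : 0 < p)
    (hq : ((β₀ : ℝ) + 1) * p < 1) (hR : 1 ≤ R) :
    ∃ C > 0, ∀ x t : ℝ, 0 ≤ x → R ≤ t - x → R ≤ x + t →
      (∫ s in (0:ℝ)..t, ∫ y in (x - t + s)..(x + t - s),
          (if R ≤ s - |y| then (1 + y + s) ^ (-(((β₀ : ℝ) + 1) * p)) else 0)) ≤
        C * (t - x - R) * (1 + t + x) ^ (-(((β₀ : ℝ) + 1) * p) + 1) := by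
  set q : ℝ := ((β₀ : ℝ) + 1) * p with hqdef
  have hq0 : 0 < q := by positivity
  have hq1 : q < 1 := hq
  have h1q : 0 < 1 - q := by linarith
  refine ⟨1 / (1 - q), by positivity, ?_⟩
  intro x t hx htx hxt
  have ht0 : (0:ℝ) ≤ t := by linarith
  have hd : 0 ≤ t - x - R := by linarith
  have hA0 : (0:ℝ) ≤ (1 + t + x) ^ (-q + 1) := Real.rpow_nonneg (by linarith) _
  have hRHS0 : 0 ≤ 1 / (1 - q) * (t - x - R) * (1 + t + x) ^ (-q + 1) := by
    have h1 : (0:ℝ) ≤ 1 / (1 - q) := by positivity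
    exact mul_nonneg (mul_nonneg h1 hd) hA0
  set F : ℝ → ℝ → ℝ := fun s u =>
    if R ≤ 2*s - u ∧ 2*s - u ≤ t - x ∧ R ≤ u ∧ u ≤ x + t then (1 + u) ^ (-q) else 0
    with hFdef
  have hFnonneg : ∀ s u, 0 ≤ F s u := by
    intro s u
    simp only [hFdef]
    split_ifs with h
    · exact Real.rpow_nonneg (by linarith [h.2.2.1]) _
    · exact le_refl 0
  have hFle1 : ∀ s u, ‖F s u‖ ≤ 1 := by
    intro s u
    rw [Real.norm_eq_abs, abs_of_nonneg (hFnonneg s u)]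
    simp only [hFdef]
    split_ifs with h
    · exact Real.rpow_le_one_of_one_le_of_nonpos (by linarith [h.2.2.1]) (by linarith)
    · linarith
  have hFm : Measurable (fun z : ℝ × ℝ => F z.1 z.2) := by
    simp only [hFdef]
    apply Measurable.ite
    · have h1 : MeasurableSet {z : ℝ × ℝ | R ≤ 2 * z.1 - z.2} :=
        measurableSet_le measurable_const (by fun_prop)
      have h2 : MeasurableSet {z : ℝ × ℝ | 2 * z.1 - z.2 ≤ t - x} :=
        measurableSet_le (by fun_prop) measurable_const
      have h3 : MeasurableSet {z : ℝ × ℝ | R ≤ z.2} :=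
        measurableSet_le measurable_const measurable_snd
      have h4 : MeasurableSet {z : ℝ × ℝ | z.2 ≤ x + t} :=
        measurableSet_le measurable_snd measurable_const
      exact (h1.inter (h2.inter (h3.inter h4)))
    · measurability
    · measurability
  have hFm_u : ∀ s, Measurable (F s) := fun s => hFm.comp measurable_prodMk_left
  have hFint_u : ∀ s, Integrable (F s) := by
    intro s
    have heq : F s = (Set.Icc R (x+t)).indicator (F s) := by
      funext u
      by_cases hu : u ∈ Set.Icc R (x+t)
      · rw [Set.indicator_of_mem hu]
      · rw [Set.indicator_of_notMem hu]
        simp only [hFdef]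
        rw [if_neg]
        intro hc
        exact hu (Set.mem_Icc.mpr ⟨hc.2.2.1, hc.2.2.2⟩)
    rw [heq, integrable_indicator_iff measurableSet_Icc]
    exact Measure.integrableOn_of_bounded measure_Icc_lt_top.ne
      (hFm_u s).aestronglyMeasurable
      (Filter.Eventually.of_forall fun u => hFle1 s u)
  have hFint : Integrable (fun z : ℝ × ℝ => F z.1 z.2) := by
    have heq : (fun z : ℝ × ℝ => F z.1 z.2)
        = (Set.Icc R t ×ˢ Set.Icc R (x+t)).indicator (fun z => F z.1 z.2) := by
      funext z
      by_cases hz : z ∈ Set.Icc R t ×ˢ Set.Icc R (x+t)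
      · rw [Set.indicator_of_mem hz]
      · rw [Set.indicator_of_notMem hz]
        simp only [hFdef]
        rw [if_neg]
        intro hc
        obtain ⟨h1, h2, h3, h4⟩ := hc
        exact hz ⟨⟨by linarith, by linarith⟩, ⟨h3, h4⟩⟩
    rw [heq, integrable_indicator_iff (measurableSet_Icc.prod measurableSet_Icc)]
    exact Measure.integrableOn_of_bounded
      ((isCompact_Icc.prod isCompact_Icc).measure_lt_top).ne
      hFm.aestronglyMeasurable
      (Filter.Eventually.of_forall fun z => hFle1 z.1 z.2)
  have hΦint : Integrable (fun s => ∫ u, F s u) := by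
    have := hFint.integral_prod_left
    simpa using this
  -- Step 1 : inner bound
  have step1 : ∀ s ∈ Set.Icc (0:ℝ) t,
      (∫ y in (x - t + s)..(x + t - s), (if R ≤ s - |y| then (1 + y + s) ^ (-q) else 0))
        ≤ ∫ u, F s u := by
    intro s hs
    obtain ⟨hs0, hst⟩ := hs
    set f : ℝ → ℝ := fun y => if R ≤ s - |y| then (1 + y + s) ^ (-q) else 0 with hfdef
    by_cases hfi : IntervalIntegrable f volume (x - t + s) (x + t - s)
    · have key : (∫ y in (x - t + s)..(x + t - s), f y)
          = ∫ u in (x - t + 2*s)..(x + t), f (u - s) := by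
        rw [intervalIntegral.integral_comp_sub_right f s]
        congr 1 <;> ring_nf
      rw [key]
      have hab : x - t + 2*s ≤ x + t := by linarith
      have hcomp : IntervalIntegrable (fun u => f (u - s)) volume (x - t + 2*s) (x + t) := by
        have h := hfi.comp_sub_right s
        have e1 : x - t + s + s = x - t + 2*s := by ring
        have e2 : x + t - s + s = x + t := by ring
        rwa [e1, e2] at h
      have hFIu : IntervalIntegrable (F s) volume (x - t + 2*s) (x + t) :=
        (hFint_u s).intervalIntegrable
      calc (∫ u in (x - t + 2*s)..(x + t), f (u - s))
          ≤ ∫ u in (x - t + 2*s)..(x + t), F s u := by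
            apply intervalIntegral.integral_mono_on hab hcomp hFIu
            intro u hu
            obtain ⟨hu1, hu2⟩ := hu
            simp only [hfdef, hFdef]
            have habs1 : u - s ≤ |u - s| := le_abs_self _
            have habs2 : -|u - s| ≤ u - s := neg_abs_le _
            split_ifs with h1 h2
            · have e : 1 + (u - s) + s = 1 + u := by ring
              rw [e]
            · exfalso
              exact h2 ⟨by linarith, by linarith, by linarith, hu2⟩
            · exact Real.rpow_nonneg (by rename_i hcond; linarith [hcond.2.2.1]) _
            · exact le_refl 0
        _ ≤ ∫ u, F s u := by
            rw [intervalIntegral.integral_of_le hab]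
            exact setIntegral_le_integral (hFint_u s)
              (Filter.Eventually.of_forall (hFnonneg s))
    · rw [intervalIntegral.integral_undef hfi]
      exact integral_nonneg (hFnonneg s)
  -- main chain
  by_cases hI : IntervalIntegrable
      (fun s => ∫ y in (x - t + s)..(x + t - s),
        (if R ≤ s - |y| then (1 + y + s) ^ (-q) else 0)) volume 0 t
  swap
  · rw [intervalIntegral.integral_undef hI]
    exact hRHS0
  have main1 : (∫ s in (0:ℝ)..t, ∫ y in (x - t + s)..(x + t - s),
        (if R ≤ s - |y| then (1 + y + s) ^ (-q) else 0))
      ≤ ∫ s in (0:ℝ)..t, ∫ u, F s u :=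
    intervalIntegral.integral_mono_on ht0 hI hΦint.intervalIntegrable step1
  have main2 : (∫ s in (0:ℝ)..t, ∫ u, F s u) ≤ ∫ s, ∫ u, F s u := by
    rw [intervalIntegral.integral_of_le ht0]
    exact setIntegral_le_integral hΦint
      (Filter.Eventually.of_forall fun s => integral_nonneg (hFnonneg s))
  have main3 : (∫ s, ∫ u, F s u) = ∫ u, ∫ s, F s u := integral_integral_swap hFint
  -- compute inner s-integral
  have hsint : ∀ u : ℝ,
      (∫ s, F s u) = (if R ≤ u ∧ u ≤ x + t then (1+u)^(-q) else 0) * ((t - x - R)/2) := by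
    intro u
    by_cases hu : R ≤ u ∧ u ≤ x + t
    · have hrw : (fun s => F s u)
          = (Set.Icc ((u+R)/2) ((u + (t-x))/2)).indicator (fun _ => (1+u)^(-q)) := by
        funext s
        by_cases hsmem : s ∈ Set.Icc ((u+R)/2) ((u + (t-x))/2)
        · rw [Set.indicator_of_mem hsmem]
          obtain ⟨hsl, hsr⟩ := Set.mem_Icc.mp hsmem
          simp only [hFdef]
          rw [if_pos ⟨by linarith, by linarith, hu.1, hu.2⟩]
        · rw [Set.indicator_of_notMem hsmem]
          simp only [hFdef]
          rw [if_neg]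
          intro hc
          exact hsmem (Set.mem_Icc.mpr ⟨by linarith [hc.1], by linarith [hc.2.1]⟩)
      rw [hrw, if_pos hu, integral_indicator_const _ measurableSet_Icc,
        Real.volume_real_Icc_of_le (by linarith), smul_eq_mul]
      rw [mul_comm]
      congr 1
      ring
    · rw [if_neg hu, zero_mul]
      have : (fun s => F s u) = fun _ => (0:ℝ) := by
        funext s
        simp only [hFdef]
        rw [if_neg]
        intro hc
        exact hu ⟨hc.2.2.1, hc.2.2.2⟩
      rw [this, integral_zero]
  have main4 : (∫ u, ∫ s, F s u)
      = (∫ u, (if R ≤ u ∧ u ≤ x + t then (1+u)^(-q) else 0)) * ((t - x - R)/2) := by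
    rw [show (fun u => ∫ s, F s u)
        = fun u => (if R ≤ u ∧ u ≤ x + t then (1+u)^(-q) else 0) * ((t - x - R)/2)
      from funext hsint]
    exact integral_mul_const _ _
  have hcind : (fun u : ℝ => (if R ≤ u ∧ u ≤ x + t then (1+u)^(-q) else 0))
      = (Set.Icc R (x+t)).indicator (fun u => (1+u)^(-q)) := by
    funext u
    by_cases hu : u ∈ Set.Icc R (x+t)
    · rw [Set.indicator_of_mem hu, if_pos (Set.mem_Icc.mp hu)]
    · rw [Set.indicator_of_notMem hu, if_neg (fun h => hu (Set.mem_Icc.mpr h))]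
  have main5 : (∫ u, (if R ≤ u ∧ u ≤ x + t then (1+u)^(-q) else 0))
      = ∫ u in R..(x+t), (1+u)^(-q) := by
    rw [hcind, integral_indicator measurableSet_Icc, integral_Icc_eq_integral_Ioc,
      ← intervalIntegral.integral_of_le hxt]
  have main6 : (∫ u in R..(x+t), (1+u)^(-q))
      = ((1+(x+t))^(-q+1) - (1+R)^(-q+1)) / (-q+1) := by
    have hshift := intervalIntegral.integral_comp_add_left (a := R) (b := x + t)
      (fun v : ℝ => v ^ (-q)) 1
    rw [hshift, integral_rpow (Or.inl (by linarith : (-1:ℝ) < -q))]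
  -- final inequality
  have hB0 : (0:ℝ) ≤ (1+R)^(-q+1) := Real.rpow_nonneg (by linarith) _
  have hAeq : (1+(x+t))^(-q+1) = (1 + t + x) ^ (-q+1) := by
    rw [show (1:ℝ) + (x + t) = 1 + t + x by ring]
  have final : ((1+(x+t))^(-q+1) - (1+R)^(-q+1)) / (-q+1) * ((t - x - R)/2)
      ≤ 1 / (1 - q) * (t - x - R) * (1 + t + x) ^ (-q + 1) := by
    rw [hAeq]
    set A := (1 + t + x) ^ (-q+1) with hAdef
    set B := (1+R)^(-q+1) with hBdef
    have h2 : (A - B) / (-q+1) * ((t - x - R)/2) = 1/(1-q) * ((A - B) * ((t-x-R)/2)) := by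
      rw [show -q+1 = 1-q by ring]
      ring
    rw [h2, mul_assoc]
    apply mul_le_mul_of_nonneg_left _ (by positivity)
    nlinarith
  calc (∫ s in (0:ℝ)..t, ∫ y in (x - t + s)..(x + t - s),
        (if R ≤ s - |y| then (1 + y + s) ^ (-q) else 0))
      ≤ ∫ s, ∫ u, F s u := le_trans main1 main2
    _ = ((1+(x+t))^(-q+1) - (1+R)^(-q+1)) / (-q+1) * ((t - x - R)/2) := by
        rw [main3, main4, main5, main6]
    _ ≤ 1 / (1 - q) * (t - x - R) * (1 + t + x) ^ (-q + 1) := final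
end
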